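/- Let I be a monomial ideal in R = k[x_1,...,x_r], y a new variable, and S = R[y]. Then for every n ≥ 1, \overline{(I,y)^n} = ∑_{i=0}^{n} y^i · \overline{I^{n−i}} S, where \overline{J} denotes integral closure and \overline{I^0} = R. -/

import Mathlib

open MvPolynomial Pointwise

/-- `J` is the integral closure of the ideal `I`: the set of elements `x` satisfying an
integral relation `x^n + a_1 x^{n-1} + ... + a_n = 0` with `a_i ∈ I^i`. -/
def IsIntClosure {R : Type*} [CommRing R] (I J : Ideal R) : Prop :=
  ∀ x : R, x ∈ J ↔ ∃ n : ℕ, 0 < n ∧ ∃ a : ℕ → R, (∀ i, a i ∈ I ^ i) ∧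
    x ^ n + ∑ i ∈ Finset.Icc 1 n, a i * x ^ (n - i) = 0

/-- A monomial ideal in a polynomial ring: an ideal generated by monomials. -/
def IsMonomialIdeal {k : Type*} [Field k] {σ : Type*} (I : Ideal (MvPolynomial σ k)) : Prop :=
  ∃ S : Set (σ →₀ ℕ), I = Ideal.span ((fun a => (monomial a (1 : k))) '' S)

/-- depth of `R/J` with respect to the ideal `m`: the supremum of lengths of regular
sequences on `R/J` consisting of elements of `m`. -/
noncomputable def quotDepth {R : Type*} [CommRing R] (m J : Ideal R) : ℕ :=
  sSup {n : ℕ | ∃ rs : List R, rs.length = n ∧ (∀ x ∈ rs, x ∈ m) ∧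
    RingTheory.Sequence.IsRegular (R ⧸ J) rs}

/-- `R/J` is Cohen-Macaulay: depth equals Krull dimension. -/
def QuotIsCM {R : Type*} [CommRing R] (m J : Ideal R) : Prop :=
  (quotDepth m J : WithBot ℕ∞) = ringKrullDim (R ⧸ J)

/-- Krull dimension of a ring, as a natural number. -/
noncomputable def dimNat (R : Type*) [CommRing R] : ℕ :=
  ENat.toNat (WithBot.unbotD 0 (ringKrullDim R))

/-- analytic spread of `I`: the Krull dimension of the fiber cone, i.e. of the
Rees algebra of `I` modulo the extension of the maximal ideal `m`. -/
noncomputable def analyticSpread {R : Type*} [CommRing R] (m I : Ideal R) : ℕ :=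
  dimNat ((reesAlgebra I) ⧸ (Ideal.map (algebraMap R (reesAlgebra I)) m))

/-- height of an ideal: infimum of heights of primes containing it. -/
noncomputable def idealHeight {R : Type*} [CommRing R] (I : Ideal R) : ℕ∞ :=
  ⨅ p ∈ {p : PrimeSpectrum R | I ≤ p.asIdeal}, Order.height p

/-- the maximal homogeneous ideal `(x_1,...,x_r)` of a polynomial ring. -/
noncomputable def maxIdeal (k : Type*) [Field k] (σ : Type*) : Ideal (MvPolynomial σ k) :=
  Ideal.span (Set.range X)

/-- exponent set of a monomial ideal, viewed in `ℝ^r`. -/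
def expSet {k : Type*} [Field k] {r : ℕ} (I : Ideal (MvPolynomial (Fin r) k)) :
    Set (Fin r → ℝ) :=
  {x | ∃ a : Fin r →₀ ℕ, monomial a (1 : k) ∈ I ∧ x = fun i => (a i : ℝ)}

/-- Newton polyhedron of a monomial ideal: convex hull of the exponent set. -/
noncomputable def newtonPolyhedron {k : Type*} [Field k] {r : ℕ}
    (I : Ideal (MvPolynomial (Fin r) k)) : Set (Fin r → ℝ) :=
  convexHull ℝ (expSet I)

/-- a simplicial complex on the vertex set `σ`: a downward closed family of finite sets. -/
def IsSimplicialComplex {σ : Type*} (Δ : Set (Finset σ)) : Prop :=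
  ∅ ∈ Δ ∧ ∀ F ∈ Δ, ∀ G ⊆ F, G ∈ Δ

/-- Stanley-Reisner ideal of a simplicial complex: generated by the squarefree
monomials corresponding to non-faces. -/
noncomputable def srIdeal {k : Type*} [Field k] {σ : Type*} (Δ : Set (Finset σ)) :
    Ideal (MvPolynomial σ k) :=
  Ideal.span {f | ∃ F : Finset σ, F ∉ Δ ∧ f = ∏ i ∈ F, X i}

/-- the degree complex `Δ_α(J)` of a monomial ideal `J`:
`F ∈ Δ_α(J)` iff `x^α ∉ J R_F`, i.e. no multiple of `x^α` by a monomial in the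
variables of `F` lies in `J`. -/
def degComplex {k : Type*} [Field k] {r : ℕ} (J : Ideal (MvPolynomial (Fin r) k))
    (α : Fin r →₀ ℕ) : Set (Finset (Fin r)) :=
  {F | ∀ γ : Fin r →₀ ℕ, (∀ i, γ i ≠ 0 → i ∈ F) → monomial (α + γ) (1 : k) ∉ J}

/-- an ideal is unmixed if all associated primes of `R/J` have the same height. -/
def IsUnmixed {R : Type*} [CommRing R] (J : Ideal R) : Prop :=
  ∀ p ∈ associatedPrimes R (R ⧸ J), ∀ q ∈ associatedPrimes R (R ⧸ J),
    idealHeight p = idealHeight q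

open Pointwise

section AuxIC

variable {A : Type*} [CommRing A]

/-- From an integral equation of degree `m`, high powers lie in high powers of `J`. -/
lemma auxIC_pow_mem (J : Ideal A) (x : A) (m : ℕ) (a : ℕ → A)
    (ha : ∀ j, a j ∈ J ^ j)
    (heq : x ^ m + ∑ j ∈ Finset.Icc 1 m, a j * x ^ (m - j) = 0) :
    ∀ N, x ^ (m + N) ∈ J ^ (N + 1) := by
  intro N
  induction N using Nat.strong_induction_on with
  | _ N ih =>
    have hx : x ^ (m + N) = -∑ j ∈ Finset.Icc 1 m, a j * x ^ (m - j) * x ^ N := by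
      have h1 : x ^ m = -∑ j ∈ Finset.Icc 1 m, a j * x ^ (m - j) := by
        linear_combination heq
      rw [pow_add, h1, neg_mul, Finset.sum_mul]
    rw [hx]
    refine neg_mem (Submodule.sum_mem _ ?_)
    intro j hj
    rw [Finset.mem_Icc] at hj
    by_cases hjN : j ≤ N
    · have h1 : (m - j) + N = m + (N - j) := by omega
      have h2 : a j * x ^ (m - j) * x ^ N = a j * x ^ (m + (N - j)) := by
        rw [mul_assoc, ← pow_add, h1]
      rw [h2]
      have h3 : x ^ (m + (N - j)) ∈ J ^ (N - j + 1) := ih (N - j) (by omega)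
      have h4 : J ^ j * J ^ (N - j + 1) ≤ J ^ (N + 1) := by
        rw [← pow_add]; exact Ideal.pow_le_pow_right (by omega)
      exact h4 (Ideal.mul_mem_mul (ha j) h3)
    · have h1 : a j ∈ J ^ (N + 1) := Ideal.pow_le_pow_right (by omega) (ha j)
      exact Ideal.mul_mem_right _ _ (Ideal.mul_mem_right _ _ h1)

/-- The ideal of polynomials whose `j`-th coefficient lies in `I ^ (p - j)`. -/
def auxIC_coeffIdeal (I : Ideal A) (p : ℕ) : Ideal (Polynomial A) where
  carrier := {g | ∀ j, g.coeff j ∈ I ^ (p - j)}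
  add_mem' := fun hg hh j => by
    simpa [Polynomial.coeff_add] using add_mem (hg j) (hh j)
  zero_mem' := fun j => by simp
  smul_mem' := fun s g hg => by
    intro j
    rw [smul_eq_mul, Polynomial.coeff_mul]
    refine Submodule.sum_mem _ ?_
    rintro ⟨u, v⟩ huv
    rw [Finset.HasAntidiagonal.mem_antidiagonal] at huv
    exact Ideal.mul_mem_left _ _ (Ideal.pow_le_pow_right (by omega) (hg v))

lemma auxIC_mem_coeffIdeal {I : Ideal A} {p : ℕ} {g : Polynomial A} :
    g ∈ auxIC_coeffIdeal I p ↔ ∀ j, g.coeff j ∈ I ^ (p - j) := Iff.rfl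

lemma auxIC_coeffIdeal_mul (I : Ideal A) (p q : ℕ) :
    auxIC_coeffIdeal I p * auxIC_coeffIdeal I q ≤ auxIC_coeffIdeal I (p + q) := by
  rw [Ideal.mul_le]
  intro g hg h hh
  intro j
  rw [Polynomial.coeff_mul]
  refine Submodule.sum_mem _ ?_
  rintro ⟨u, v⟩ huv
  rw [Finset.HasAntidiagonal.mem_antidiagonal] at huv
  have h1 : I ^ (p - u) * I ^ (q - v) ≤ I ^ (p + q - j) := by
    rw [← pow_add]; exact Ideal.pow_le_pow_right (by omega)
  exact h1 (Ideal.mul_mem_mul (hg u) (hh v))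

lemma auxIC_pow_le_coeffIdeal (I : Ideal A) (p : ℕ) :
    (Ideal.map Polynomial.C I ⊔ Ideal.span {(Polynomial.X : Polynomial A)}) ^ p
      ≤ auxIC_coeffIdeal I p := by
  induction p with
  | zero =>
    intro g _ j
    have h0 : (0 : ℕ) - j = 0 := by omega
    rw [h0, pow_zero, Ideal.one_eq_top]
    exact Submodule.mem_top
  | succ p ih =>
    have hbase : (Ideal.map Polynomial.C I ⊔ Ideal.span {(Polynomial.X : Polynomial A)})
        ≤ auxIC_coeffIdeal I 1 := by
      refine sup_le ?_ ?_
      · rw [Ideal.map_le_iff_le_comap]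
        intro b hb
        rw [Ideal.mem_comap]
        intro j
        rw [Polynomial.coeff_C]
        split
        · next h => subst h; simpa using hb
        · exact Submodule.zero_mem _
      · rw [Ideal.span_le]
        rintro g hg
        rw [Set.mem_singleton_iff] at hg
        subst hg
        intro j
        rw [Polynomial.coeff_X]
        split
        · next h => rw [show (1 : ℕ) - j = 0 by omega, pow_zero, Ideal.one_eq_top]
                    exact Submodule.mem_top
        · exact Submodule.zero_mem _
    rw [pow_succ]
    exact le_trans (Ideal.mul_mono ih hbase) (auxIC_coeffIdeal_mul I p 1)

end AuxIC


section AuxDet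

variable {A : Type*} [CommRing A]

lemma auxIC_det_trick [IsDomain A] [IsNoetherianRing A]
    (J : Ideal A) (c v : A) (hv : v ≠ 0) (h : ∀ N, v * c ^ N ∈ J ^ N) :
    ∃ m, 0 < m ∧ ∃ a : ℕ → A, (∀ j, a j ∈ J ^ j) ∧
      c ^ m + ∑ j ∈ Finset.Icc 1 m, a j * c ^ (m - j) = 0 := by
  classical
  set z : Polynomial A := Polynomial.C c * Polynomial.X with hz
  have hzt : ∀ t : ℕ, z ^ t = Polynomial.C (c ^ t) * Polynomial.X ^ t := by
    intro t; rw [hz, mul_pow, ← map_pow]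
  have he : ∀ t : ℕ, (Polynomial.C v * z ^ t) ∈ reesAlgebra J := by
    intro t
    rw [mem_reesAlgebra_iff]
    intro i
    rw [hzt, ← mul_assoc, ← map_mul, Polynomial.coeff_C_mul, Polynomial.coeff_X_pow]
    split
    · next hit => subst hit; simpa using h i
    · simpa using Submodule.zero_mem _
  set E : ℕ → reesAlgebra J := fun t => ⟨Polynomial.C v * z ^ t, he t⟩ with hE
  have hF : Monotone (fun N => Ideal.span (E '' Set.Iic N)) := by
    intro N N' hNN'
    exact Ideal.span_mono (Set.image_mono (Set.Iic_subset_Iic.mpr hNN'))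
  obtain ⟨M₀, hM₀⟩ := monotone_stabilizes_iff_noetherian.mpr (inferInstance : IsNoetherianRing (reesAlgebra J))
    (⟨fun N => Ideal.span (E '' Set.Iic N), hF⟩ : ℕ →o Ideal (reesAlgebra J))
  have hmem : E (M₀ + 1) ∈ Ideal.span (E '' Set.Iic M₀) := by
    have h1 : E (M₀ + 1) ∈ Ideal.span (E '' Set.Iic (M₀ + 1)) :=
      Ideal.subset_span ⟨M₀ + 1, Set.self_mem_Iic, rfl⟩
    have h2 : Ideal.span (E '' Set.Iic M₀) = Ideal.span (E '' Set.Iic (M₀ + 1)) :=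
      hM₀ (M₀ + 1) (Nat.le_succ _)
    rw [h2]
    exact h1
  rw [Ideal.span, Submodule.mem_span_set'] at hmem
  obtain ⟨K, f, g, hsum⟩ := hmem
  choose t ht hEt using fun i => (g i).2
  set m := M₀ + 1 with hm
  have hsum' : Polynomial.C v * z ^ m =
      ∑ i, ((f i : Polynomial A) * (Polynomial.C v * z ^ (t i))) := by
    have h1 := congrArg (Subtype.val : reesAlgebra J → Polynomial A) hsum
    simp only [AddSubmonoidClass.coe_finset_sum, smul_eq_mul, MulMemClass.coe_mul] at h1
    rw [show Polynomial.C v * z ^ m = ↑(E m) from rfl, ← h1]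
    refine Finset.sum_congr rfl fun i _ => ?_
    rw [← hEt i]
  have hcancel : z ^ m = ∑ i, (f i : Polynomial A) * z ^ (t i) := by
    have h1 : Polynomial.C v * z ^ m =
        Polynomial.C v * ∑ i, (f i : Polynomial A) * z ^ (t i) := by
      rw [hsum', Finset.mul_sum]
      refine Finset.sum_congr rfl fun i _ => by ring
    have h2 : (Polynomial.C v : Polynomial A) ≠ 0 := by
      simpa using hv
    exact mul_left_cancel₀ h2 h1
  have hco : c ^ m = ∑ i, ((f i : Polynomial A)).coeff (m - t i) * c ^ (t i) := by
    have h1 := congrArg (fun p => Polynomial.coeff p m) hcancel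
    rw [hzt, Polynomial.coeff_C_mul, Polynomial.coeff_X_pow, if_pos rfl, mul_one] at h1
    rw [h1, Polynomial.finset_sum_coeff]
    refine Finset.sum_congr rfl fun i _ => ?_
    rw [hzt, ← mul_assoc, Polynomial.coeff_mul_X_pow', if_pos ?_, Polynomial.coeff_mul_C]
    exact le_trans (ht i) (Nat.le_succ _)
  refine ⟨m, Nat.succ_pos _,
    fun j => -(∑ i : Fin K, if t i = m - j then ((f i : Polynomial A)).coeff j else 0), ?_, ?_⟩
  · intro j
    refine neg_mem (Submodule.sum_mem _ fun i _ => ?_)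
    split
    · exact (mem_reesAlgebra_iff J _).mp (f i).2 j
    · exact Submodule.zero_mem _
  · have key : ∀ i : Fin K, ∑ j ∈ Finset.Icc 1 m,
        (if t i = m - j then ((f i : Polynomial A)).coeff j * c ^ (m - j) else 0)
        = ((f i : Polynomial A)).coeff (m - t i) * c ^ (t i) := by
      intro i
      have hti : t i ≤ M₀ := ht i
      rw [Finset.sum_eq_single_of_mem (m - t i) (by rw [Finset.mem_Icc]; omega)
        (fun j hj hne => ?_)]
      · rw [if_pos (by omega), show m - (m - t i) = t i by omega]
      · rw [Finset.mem_Icc] at hj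
        rw [if_neg (by omega)]
    have h2 : ∑ j ∈ Finset.Icc 1 m,
        (-(∑ i : Fin K, if t i = m - j then ((f i : Polynomial A)).coeff j else 0)) * c ^ (m - j)
        = -∑ i : Fin K, ((f i : Polynomial A)).coeff (m - t i) * c ^ (t i) := by
      have h3 : ∀ j ∈ Finset.Icc 1 m,
          (-(∑ i : Fin K, if t i = m - j then ((f i : Polynomial A)).coeff j else 0)) * c ^ (m - j)
          = -(∑ i : Fin K, if t i = m - j then ((f i : Polynomial A)).coeff j * c ^ (m - j) else 0) := by
        intro j _
        rw [neg_mul, Finset.sum_mul]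
        congr 1
        refine Finset.sum_congr rfl fun i _ => ?_
        rw [ite_mul, zero_mul]
      rw [Finset.sum_congr rfl h3, Finset.sum_neg_distrib, Finset.sum_comm]
      congr 1
      exact Finset.sum_congr rfl fun i _ => key i
    rw [h2, ← hco]
    ring

end AuxDet


section AuxEasy

variable {A : Type*} [CommRing A]

/-- The ideal `{s | x * s ∈ K}`. -/
def auxIC_divIdeal (K : Ideal A) (x : A) : Ideal A where
  carrier := {s | x * s ∈ K}
  add_mem' := fun {a b} ha hb => by simpa [mul_add] using K.add_mem ha hb
  zero_mem' := by simp
  smul_mem' := fun c s hs => by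
    simpa [smul_eq_mul, mul_left_comm x c s] using K.mul_mem_left c hs

lemma auxIC_easy_rel (I : Ideal A) (n i : ℕ) (hi : i ≤ n) (b : A)
    (m : ℕ) (hm : 0 < m) (a : ℕ → A) (ha : ∀ j, a j ∈ (I ^ (n - i)) ^ j)
    (heq : b ^ m + ∑ j ∈ Finset.Icc 1 m, a j * b ^ (m - j) = 0) :
    ∃ m', 0 < m' ∧ ∃ a' : ℕ → Polynomial A,
      (∀ j, a' j ∈ ((Ideal.map Polynomial.C I ⊔
        Ideal.span {(Polynomial.X : Polynomial A)}) ^ n) ^ j) ∧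
      (Polynomial.C b * Polynomial.X ^ i) ^ m' +
        ∑ j ∈ Finset.Icc 1 m', a' j * (Polynomial.C b * Polynomial.X ^ i) ^ (m' - j) = 0 := by
  set M : Ideal (Polynomial A) :=
    Ideal.map Polynomial.C I ⊔ Ideal.span {(Polynomial.X : Polynomial A)} with hM
  refine ⟨m, hm, fun j => Polynomial.C (a j) * Polynomial.X ^ (i * j), ?_, ?_⟩
  · intro j
    rw [← pow_mul]
    have h1 : Polynomial.C (a j) ∈ (Ideal.map Polynomial.C I) ^ ((n - i) * j) := by
      have h2 : a j ∈ I ^ ((n - i) * j) := by rw [pow_mul]; exact ha j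
      have h3 := Ideal.mem_map_of_mem (Polynomial.C : A →+* Polynomial A) h2
      rwa [Ideal.map_pow] at h3
    have h4 : (Polynomial.X : Polynomial A) ^ (i * j) ∈
        (Ideal.span {(Polynomial.X : Polynomial A)}) ^ (i * j) := by
      rw [Ideal.span_singleton_pow]
      exact Ideal.subset_span rfl
    have h5 : (Ideal.map Polynomial.C I) ^ ((n - i) * j) *
        (Ideal.span {(Polynomial.X : Polynomial A)}) ^ (i * j) ≤ M ^ (n * j) := by
      have h6 : (Ideal.map Polynomial.C I) ^ ((n - i) * j) ≤ M ^ ((n - i) * j) :=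
        Ideal.pow_right_mono le_sup_left _
      have h7 : (Ideal.span {(Polynomial.X : Polynomial A)}) ^ (i * j) ≤ M ^ (i * j) :=
        Ideal.pow_right_mono le_sup_right _
      refine le_trans (Ideal.mul_mono h6 h7) ?_
      rw [← pow_add]
      have h8 : (n - i) * j + i * j = n * j := by
        rw [← add_mul, Nat.sub_add_cancel hi]
      rw [h8]
    exact h5 (Ideal.mul_mem_mul h1 h4)
  · have hterm : ∀ j ∈ Finset.Icc 1 m,
        (Polynomial.C (a j) * Polynomial.X ^ (i * j)) *
          (Polynomial.C b * Polynomial.X ^ i) ^ (m - j)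
        = Polynomial.C (a j * b ^ (m - j)) * Polynomial.X ^ (i * m) := by
      intro j hj
      rw [Finset.mem_Icc] at hj
      obtain ⟨d, hd⟩ := Nat.le.dest hj.2
      have hmj : m - j = d := by omega
      rw [mul_pow, ← map_pow, ← pow_mul, hmj]
      have h9 : i * j + i * d = i * m := by rw [← hd]; ring
      calc Polynomial.C (a j) * Polynomial.X ^ (i * j) *
            (Polynomial.C (b ^ d) * Polynomial.X ^ (i * d))
          = Polynomial.C (a j * b ^ d) * (Polynomial.X ^ (i * j) * Polynomial.X ^ (i * d)) := by
            rw [map_mul]; ring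
        _ = Polynomial.C (a j * b ^ d) * Polynomial.X ^ (i * m) := by
            rw [← pow_add, h9]
    rw [Finset.sum_congr rfl hterm, ← Finset.sum_mul, ← map_sum, mul_pow, ← map_pow, ← pow_mul,
      ← add_mul, ← map_add, heq, map_zero, zero_mul]

end AuxEasy

/-- `\overline{(I,y)^n} = ∑_{i=0}^n y^i \overline{I^{n-i}} S` in `S = R[y]`. -/
theorem intClosure_pow_sup_var {k : Type*} [Field k] {r : ℕ}
    (I : Ideal (MvPolynomial (Fin r) k)) (hI : IsMonomialIdeal I) (n : ℕ) (hn : 1 ≤ n)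
    (Jb : ℕ → Ideal (MvPolynomial (Fin r) k))
    (hJb : ∀ i, i ≤ n → IsIntClosure (I ^ i) (Jb i))
    (K : Ideal (Polynomial (MvPolynomial (Fin r) k)))
    (hK : IsIntClosure
      ((Ideal.map Polynomial.C I ⊔ Ideal.span {(Polynomial.X : Polynomial (MvPolynomial (Fin r) k))}) ^ n) K) :
    K = ⨆ i ∈ Finset.range (n + 1),
      Ideal.span {(Polynomial.X : Polynomial (MvPolynomial (Fin r) k)) ^ i} *
        Ideal.map Polynomial.C (Jb (n - i)) := by
  classical
  set M : Ideal (Polynomial (MvPolynomial (Fin r) k)) :=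
    Ideal.map Polynomial.C I ⊔
      Ideal.span {(Polynomial.X : Polynomial (MvPolynomial (Fin r) k))} with hMdef
  set RHS2 : Ideal (Polynomial (MvPolynomial (Fin r) k)) :=
    ⨆ i ∈ Finset.range (n + 1),
      Ideal.span {(Polynomial.X : Polynomial (MvPolynomial (Fin r) k)) ^ i} *
        Ideal.map Polynomial.C (Jb (n - i)) with hRHS2def
  have hJb0 : Jb 0 = ⊤ := by
    rw [eq_top_iff]
    intro x _
    refine (hJb 0 (Nat.zero_le n) x).mpr ⟨1, one_pos, fun j => if j = 1 then -x else 0, ?_, ?_⟩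
    · intro j
      have htop : (I ^ 0) ^ j = ⊤ := by rw [pow_zero, one_pow, Ideal.one_eq_top]
      rw [htop]
      exact Submodule.mem_top
    · simp
  have hXmem : (Polynomial.X : Polynomial (MvPolynomial (Fin r) k)) ∈ M :=
    Ideal.mem_sup_right (Ideal.subset_span rfl)
  have hMnK : M ^ n ≤ K := by
    intro x hx
    refine (hK x).mpr ⟨1, one_pos, fun j => if j = 1 then -x else 0, ?_, ?_⟩
    · intro j
      show (if j = 1 then -x else 0) ∈ (M ^ n) ^ j
      split
      · next hj => subst hj; convert neg_mem hx using 1; exact pow_one (M ^ n)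
      · exact Submodule.zero_mem _
    · simp
  have hXCb : ∀ i ≤ n, ∀ b ∈ Jb (n - i),
      Polynomial.C b * Polynomial.X ^ i ∈ K := by
    intro i hi b hb
    obtain ⟨m, hm, a, ha, heq⟩ := (hJb (n - i) (by omega) b).mp hb
    obtain ⟨m', hm', a', ha', heq'⟩ := auxIC_easy_rel I n i hi b m hm a ha heq
    exact (hK _).mpr ⟨m', hm', a', ha', heq'⟩
  have hRHSle : RHS2 ≤ K := by
    refine iSup₂_le fun i hi => ?_
    rw [Finset.mem_range] at hi
    have hfib : Ideal.map Polynomial.C (Jb (n - i)) ≤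
        auxIC_divIdeal K ((Polynomial.X : Polynomial (MvPolynomial (Fin r) k)) ^ i) := by
      rw [Ideal.map_le_iff_le_comap]
      intro b hb
      rw [Ideal.mem_comap]
      show Polynomial.X ^ i * Polynomial.C b ∈ K
      rw [mul_comm]
      exact hXCb i (by omega) b hb
    rw [Ideal.mul_le]
    intro rr hrr ss hss
    obtain ⟨tt, htt⟩ := Ideal.mem_span_singleton'.mp hrr
    have h1 : Polynomial.X ^ i * ss ∈ K := hfib hss
    rw [← htt, mul_assoc]
    exact K.mul_mem_left tt h1
  have hlead : ∀ f : Polynomial (MvPolynomial (Fin r) k), f ∈ K → f ≠ 0 →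
      f.natDegree < n → f.leadingCoeff ∈ Jb (n - f.natDegree) := by
    intro f hf hf0 hD
    obtain ⟨m, hm, a, ha, heq⟩ := (hK f).mp hf
    have hc0 : f.leadingCoeff ≠ 0 := Polynomial.leadingCoeff_ne_zero.mpr hf0
    set D := f.natDegree with hDdef
    set c := f.leadingCoeff with hcdef
    have hpow : ∀ N, f ^ (m + N) ∈ (M ^ n) ^ (N + 1) :=
      auxIC_pow_mem (M ^ n) f m a ha heq
    have hcoeff : ∀ N : ℕ, c ^ (m + N) ∈ I ^ (n * (N + 1) - (m + N) * D) := by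
      intro N
      have h1 : f ^ (m + N) ∈ auxIC_coeffIdeal I (n * (N + 1)) := by
        refine auxIC_pow_le_coeffIdeal I (n * (N + 1)) ?_
        rw [pow_mul]
        exact hpow N
      have h2 := h1 ((m + N) * D)
      have h3 : (f ^ (m + N)).coeff ((m + N) * D) = c ^ (m + N) := by
        have h4 : (f ^ (m + N)).natDegree = (m + N) * D := by
          rw [Polynomial.natDegree_pow]
        rw [← h4, Polynomial.coeff_natDegree, Polynomial.leadingCoeff_pow]
      rwa [h3] at h2
    have hE : ∀ N, (n - D) * N ≤ m * D + (n * (N + 1) - (m + N) * D) := by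
      intro N
      have e1 : n * (N + 1) = n * N + n := by ring
      have e2 : (m + N) * D = m * D + N * D := by ring
      have e3 : (n - D) * N = n * N - D * N := Nat.sub_mul n D N
      have e4 : D * N = N * D := Nat.mul_comm D N
      omega
    have hu0 : c ^ (m + (m * D + 1)) ∈ I := by
      refine Ideal.pow_le_self ?_ (hcoeff (m * D + 1))
      have e5 := hE (m * D + 1)
      have e6 : (n - D) * (m * D + 1) = (n - D) * (m * D) + (n - D) := by ring
      have e7 : 1 * (m * D) ≤ (n - D) * (m * D) :=
        Nat.mul_le_mul_right _ (by omega)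
      omega
    set v := (c ^ (m + (m * D + 1))) ^ (m * D) * c ^ m with hvdef
    have hvne : v ≠ 0 :=
      mul_ne_zero (pow_ne_zero _ (pow_ne_zero _ hc0)) (pow_ne_zero _ hc0)
    have hvc : ∀ N, v * c ^ N ∈ (I ^ (n - D)) ^ N := by
      intro N
      have h1 : (c ^ (m + (m * D + 1))) ^ (m * D) ∈ I ^ (m * D) :=
        Ideal.pow_mem_pow hu0 _
      have h3 : v * c ^ N = (c ^ (m + (m * D + 1))) ^ (m * D) * c ^ (m + N) := by
        rw [hvdef, mul_assoc, ← pow_add]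
      rw [h3, ← pow_mul]
      have h5 : I ^ (m * D) * I ^ (n * (N + 1) - (m + N) * D) ≤ I ^ ((n - D) * N) := by
        rw [← pow_add]
        exact Ideal.pow_le_pow_right (hE N)
      exact h5 (Ideal.mul_mem_mul h1 (hcoeff N))
    obtain ⟨m₂, hm₂, a₂, ha₂, heq₂⟩ := auxIC_det_trick (I ^ (n - D)) c v hvne hvc
    exact (hJb (n - D) (by omega) c).mpr ⟨m₂, hm₂, a₂, ha₂, heq₂⟩
  have hmonoK : ∀ f : Polynomial (MvPolynomial (Fin r) k), f ∈ K → f ≠ 0 →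
      Polynomial.C f.leadingCoeff * Polynomial.X ^ f.natDegree ∈ K := by
    intro f hf hf0
    by_cases hDn : f.natDegree < n
    · exact hXCb f.natDegree (by omega) f.leadingCoeff (hlead f hf hf0 hDn)
    · have h1 : Polynomial.C f.leadingCoeff * Polynomial.X ^ f.natDegree
          = (Polynomial.C f.leadingCoeff * Polynomial.X ^ (f.natDegree - n)) *
              Polynomial.X ^ n := by
        rw [mul_assoc, ← pow_add, Nat.sub_add_cancel (by omega)]
      rw [h1]
      exact hMnK (Ideal.mul_mem_left _ _ (Ideal.pow_mem_pow hXmem n))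
  have hmonoRHS : ∀ f : Polynomial (MvPolynomial (Fin r) k), f ∈ K → f ≠ 0 →
      Polynomial.C f.leadingCoeff * Polynomial.X ^ f.natDegree ∈ RHS2 := by
    intro f hf hf0
    by_cases hDn : f.natDegree < n
    · have hc : f.leadingCoeff ∈ Jb (n - f.natDegree) := hlead f hf hf0 hDn
      have h2 : Polynomial.C f.leadingCoeff * Polynomial.X ^ f.natDegree
          = Polynomial.X ^ f.natDegree * Polynomial.C f.leadingCoeff := mul_comm _ _
      have h1 : Polynomial.C f.leadingCoeff * Polynomial.X ^ f.natDegree ∈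
          Ideal.span {(Polynomial.X : Polynomial (MvPolynomial (Fin r) k)) ^ f.natDegree} *
            Ideal.map Polynomial.C (Jb (n - f.natDegree)) := by
        rw [h2]
        exact Ideal.mul_mem_mul (Ideal.subset_span rfl) (Ideal.mem_map_of_mem _ hc)
      exact Submodule.mem_iSup_of_mem f.natDegree
        (Submodule.mem_iSup_of_mem (Finset.mem_range.mpr (by omega)) h1)
    · have h3 : Ideal.span {(Polynomial.X : Polynomial (MvPolynomial (Fin r) k)) ^ n} *
          Ideal.map Polynomial.C (Jb (n - n)) =
          Ideal.span {(Polynomial.X : Polynomial (MvPolynomial (Fin r) k)) ^ n} := by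
        rw [Nat.sub_self, hJb0, Ideal.map_top, Ideal.mul_top]
      have h4 : Polynomial.C f.leadingCoeff * Polynomial.X ^ f.natDegree ∈
          Ideal.span {(Polynomial.X : Polynomial (MvPolynomial (Fin r) k)) ^ n} :=
        Ideal.mem_span_singleton'.mpr
          ⟨Polynomial.C f.leadingCoeff * Polynomial.X ^ (f.natDegree - n), by
            rw [mul_assoc, ← pow_add, Nat.sub_add_cancel (by omega)]⟩
      refine Submodule.mem_iSup_of_mem n
        (Submodule.mem_iSup_of_mem (Finset.mem_range.mpr (by omega)) ?_)
      rw [h3]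
      exact h4
  have main : ∀ d : ℕ, ∀ f : Polynomial (MvPolynomial (Fin r) k),
      f ∈ K → f.natDegree ≤ d → f ∈ RHS2 := by
    intro d
    induction d using Nat.strong_induction_on with
    | _ d ih =>
      intro f hf hd
      by_cases h0 : f = 0
      · rw [h0]; exact Submodule.zero_mem _
      · have hK1 : Polynomial.C f.leadingCoeff * Polynomial.X ^ f.natDegree ∈ K :=
          hmonoK f hf h0
        have hR1 : Polynomial.C f.leadingCoeff * Polynomial.X ^ f.natDegree ∈ RHS2 :=
          hmonoRHS f hf h0
        have hrest : f.eraseLead ∈ K := by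
          have hfe : f.eraseLead =
              f - Polynomial.C f.leadingCoeff * Polynomial.X ^ f.natDegree :=
            eq_sub_of_add_eq (Polynomial.eraseLead_add_C_mul_X_pow f)
          rw [hfe]
          exact Submodule.sub_mem K hf hK1
        rcases Polynomial.eraseLead_natDegree_lt_or_eraseLead_eq_zero f with h | h
        · have h5 : f.eraseLead ∈ RHS2 :=
            ih f.eraseLead.natDegree (lt_of_lt_of_le h hd) f.eraseLead hrest le_rfl
          have h6 := Submodule.add_mem RHS2 h5 hR1
          rwa [Polynomial.eraseLead_add_C_mul_X_pow] at h6
        · have h7 := Polynomial.eraseLead_add_C_mul_X_pow f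
          rw [h, zero_add] at h7
          rw [← h7]
          exact hR1
  refine le_antisymm ?_ hRHSle
  intro f hf
  exact main f.natDegree f hf le_rfl
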